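/- For every integer n ≥ 8, every generalized P-encoding φ on n input variables that is in regular form satisfies |φ| ≥ 2n + √(n+1) − 2. -/
import Mathlib


/-- Variables are natural numbers. -/
abbrev Var : Type := ℕ

/-- A literal is a variable together with a polarity (`true` = positive). -/
abbrev Lit : Type := Var × Bool

/-- A clause is a finite set of literals. -/
abbrev Clause : Type := Finset Lit

/-- A CNF formula is a finite set of clauses; its size is its number of clauses. -/
abbrev CNF : Type := Finset Clause

/-- Evaluation of a literal under a (total) assignment. -/
def Lit.eval (τ : Var → Bool) (l : Lit) : Bool :=
  if l.2 then τ l.1 else !(τ l.1)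

/-- The negation of a literal. -/
def Lit.negate (l : Lit) : Lit := (l.1, !l.2)

/-- An assignment satisfies a clause if it makes at least one of its literals true. -/
def Clause.sat (τ : Var → Bool) (C : Clause) : Prop :=
  ∃ l ∈ C, Lit.eval τ l = true

/-- An assignment satisfies a CNF formula if it satisfies every clause. -/
def CNF.sat (τ : Var → Bool) (φ : CNF) : Prop :=
  ∀ C ∈ φ, Clause.sat τ C

/-- The set of variables occurring in a CNF formula. -/
def CNF.vars (φ : CNF) : Finset Var :=
  φ.sup (fun C => C.image Prod.fst)

/-- The auxiliary variables of a formula whose input variables are `0, …, n-1`. -/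
def CNF.auxVars (n : ℕ) (φ : CNF) : Finset Var :=
  CNF.vars φ \ Finset.range n

/-- `φ` encodes the Boolean function `f`, where the input variables `x_1, …, x_n`
are the variables `0, …, n-1`: for every assignment `τ` of the input variables,
`f τ = ⊤` iff `τ` extends to a total assignment satisfying `φ`. -/
def Encodes (n : ℕ) (f : (Fin n → Bool) → Bool) (φ : CNF) : Prop :=
  ∀ τ : Fin n → Bool,
    f τ = true ↔ ∃ σ : Var → Bool, (∀ i : Fin n, σ i.1 = τ i) ∧ CNF.sat σ φ

/-- A generalized P-encoding on `n` input variables (the input variables being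
`0, …, n-1`): (a) `φ ∧ x_i` is satisfiable for each input variable, and
(b) `φ ⊨ ¬x_i ∨ ¬x_j` for all distinct input variables. -/
def GenPEncoding (n : ℕ) (φ : CNF) : Prop :=
  (∀ i < n, ∃ σ : Var → Bool, σ i = true ∧ CNF.sat σ φ) ∧
  (∀ i < n, ∀ j < n, i ≠ j →
    ∀ σ : Var → Bool, CNF.sat σ φ → ¬(σ i = true ∧ σ j = true))

/-- `Qset φ i` is the set of clauses of `φ` containing the literal `¬x_i`. -/
def Qset (φ : CNF) (i : ℕ) : Finset Clause :=
  φ.filter (fun C => ((i : Var), false) ∈ C)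

/-- `φ` is prime if no CNF formula obtained from `φ` by removing a literal from
one of its clauses is a generalized P-encoding on `n` input variables. -/
def PrimeEncoding (n : ℕ) (φ : CNF) : Prop :=
  GenPEncoding n φ ∧
  ∀ C ∈ φ, ∀ l ∈ C, ¬ GenPEncoding n (insert (C.erase l) (φ.erase C))

/-- Regular form: for each input variable `x_i`, `|Q_{φ,i}| = 2`, the only input
variable occurring in the clauses of `Q_{φ,i}` is `x_i`, and each clause of
`Q_{φ,i}` has exactly two literals. -/
def RegularForm (n : ℕ) (φ : CNF) : Prop :=
  ∀ i < n, (Qset φ i).card = 2 ∧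
    (∀ C ∈ Qset φ i, ∀ l ∈ C, l.1 < n → l.1 = i) ∧
    (∀ C ∈ Qset φ i, C.card = 2)

/-- `Lset φ i` is the set of literals `e` such that the clause `{¬x_i, e}`
belongs to `φ`. -/
def Lset (φ : CNF) (i : ℕ) : Set Lit :=
  {e | ({((i : Var), false), e} : Clause) ∈ φ}

section AuxLemmas

lemma lit_eval_true_iff (τ : Var → Bool) (l : Lit) :
    Lit.eval τ l = true ↔ τ l.1 = l.2 := by
  rcases l with ⟨v, c⟩
  cases c <;> simp [Lit.eval]

lemma lit_eval_congr {τ τ' : Var → Bool} (l : Lit) (h : τ l.1 = τ' l.1) :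
    Lit.eval τ l = Lit.eval τ' l := by
  rcases l with ⟨v, c⟩
  simp only [Lit.eval] at h ⊢
  rw [h]

lemma lit_eval_negate (τ : Var → Bool) (l : Lit) :
    Lit.eval τ (Lit.negate l) = ! Lit.eval τ l := by
  rcases l with ⟨v, c⟩
  cases c <;> simp [Lit.eval, Lit.negate]

lemma negate_negate (l : Lit) : Lit.negate (Lit.negate l) = l := by
  rcases l with ⟨v, c⟩
  simp [Lit.negate]

lemma negate_ne (l : Lit) : Lit.negate l ≠ l := by
  rcases l with ⟨v, c⟩
  cases c <;> simp [Lit.negate]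

lemma same_var_cases {l m : Lit} (h : l.1 = m.1) : l = m ∨ l = Lit.negate m := by
  rcases l with ⟨v, c⟩; rcases m with ⟨w, d⟩
  simp only at h
  subst h
  cases c <;> cases d <;> simp [Lit.negate]

lemma lit_eq_mk {l : Lit} {v : Var} {c : Bool} (h1 : l.1 = v) (h2 : l.2 = c) :
    l = (v, c) := by
  rcases l with ⟨lv, lb⟩
  simp only at h1 h2
  rw [h1, h2]

lemma clause_pair_struct {C : Clause} (h2 : C.card = 2) {x : Lit} (hx : x ∈ C) :
    ∃ y, y ≠ x ∧ C = {x, y} := by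
  obtain ⟨u, v, huv, rfl⟩ := Finset.card_eq_two.mp h2
  rcases Finset.mem_insert.mp hx with rfl | hxv
  · exact ⟨v, Ne.symm huv, rfl⟩
  · rcases Finset.mem_singleton.mp hxv with rfl
    exact ⟨u, huv, Finset.pair_comm u x⟩

end AuxLemmas

/-- For every `n ≥ 8`, every generalized P-encoding `φ` on `n` input variables
in regular form satisfies `|φ| ≥ 2n + √(n+1) − 2`. -/
theorem regular_lower_bound (n : ℕ) (hn : 8 ≤ n) (φ : CNF)
    (h : GenPEncoding n φ) (hreg : RegularForm n φ) :
    2 * (n : ℝ) + Real.sqrt ((n : ℝ) + 1) - 2 ≤ (φ.card : ℝ) := by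
  classical
  obtain ⟨ha, hb⟩ := h
  -- Step 1: extraction of the two clauses {¬x_i, a i}, {¬x_i, b i} and a witness σ i
  have H : ∀ i : ℕ, ∃ (A B : Lit) (s : Var → Bool), i < n →
      (({((i : Var), false), A} : Clause) ∈ φ ∧
       ({((i : Var), false), B} : Clause) ∈ φ ∧
       A ≠ B ∧ A ≠ ((i : Var), false) ∧ B ≠ ((i : Var), false) ∧
       (A.1 < n → A.1 = i) ∧ (B.1 < n → B.1 = i) ∧
       s i = true ∧ CNF.sat s φ ∧
       (∀ C ∈ φ, ((i : Var), false) ∈ C →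
          (C = {((i : Var), false), A} ∨ C = {((i : Var), false), B}))) := by
    intro i
    by_cases hi : i < n
    · obtain ⟨hcard, hvars, hsize⟩ := hreg i hi
      obtain ⟨C1, C2, hC12, hQ⟩ := Finset.card_eq_two.mp hcard
      have hC1Q : C1 ∈ Qset φ i := by rw [hQ]; exact Finset.mem_insert_self _ _
      have hC2Q : C2 ∈ Qset φ i := by
        rw [hQ]; exact Finset.mem_insert_of_mem (Finset.mem_singleton_self _)
      have hC1φ : C1 ∈ φ := (Finset.mem_filter.mp hC1Q).1
      have hC2φ : C2 ∈ φ := (Finset.mem_filter.mp hC2Q).1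
      have hC1l : ((i : Var), false) ∈ C1 := (Finset.mem_filter.mp hC1Q).2
      have hC2l : ((i : Var), false) ∈ C2 := (Finset.mem_filter.mp hC2Q).2
      obtain ⟨A, hAne, hC1e⟩ := clause_pair_struct (hsize C1 hC1Q) hC1l
      obtain ⟨B, hBne, hC2e⟩ := clause_pair_struct (hsize C2 hC2Q) hC2l
      obtain ⟨s, hs1, hs2⟩ := ha i hi
      refine ⟨A, B, s, fun _ => ?_⟩
      have hAB : A ≠ B := by
        intro hABeq
        apply hC12
        rw [hC1e, hC2e, hABeq]
      refine ⟨by rw [← hC1e]; exact hC1φ, by rw [← hC2e]; exact hC2φ, hAB, hAne, hBne,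
        ?_, ?_, hs1, hs2, ?_⟩
      · intro hA1
        exact hvars C1 hC1Q A
          (by rw [hC1e]; exact Finset.mem_insert_of_mem (Finset.mem_singleton_self _)) hA1
      · intro hB1
        exact hvars C2 hC2Q B
          (by rw [hC2e]; exact Finset.mem_insert_of_mem (Finset.mem_singleton_self _)) hB1
      · intro C hC hCl
        have hCQ : C ∈ Qset φ i := Finset.mem_filter.mpr ⟨hC, hCl⟩
        rw [hQ] at hCQ
        rcases Finset.mem_insert.mp hCQ with h1 | h2
        · left; rw [h1, hC1e]
        · right; rw [Finset.mem_singleton.mp h2, hC2e]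
    · exact ⟨(0, true), (0, true), fun _ => true, fun hcon => absurd hcon hi⟩
  choose a b σ hP using H
  have hmem1 : ∀ i, i < n → ({((i : Var), false), a i} : Clause) ∈ φ :=
    fun i hi => (hP i hi).1
  have hmem2 : ∀ i, i < n → ({((i : Var), false), b i} : Clause) ∈ φ :=
    fun i hi => (hP i hi).2.1
  have hab : ∀ i, i < n → a i ≠ b i := fun i hi => (hP i hi).2.2.1
  have hanf : ∀ i, i < n → a i ≠ ((i : Var), false) := fun i hi => (hP i hi).2.2.2.1
  have hbnf : ∀ i, i < n → b i ≠ ((i : Var), false) := fun i hi => (hP i hi).2.2.2.2.1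
  have havar : ∀ i, i < n → ((a i).1 < n → (a i).1 = i) :=
    fun i hi => (hP i hi).2.2.2.2.2.1
  have hbvar : ∀ i, i < n → ((b i).1 < n → (b i).1 = i) :=
    fun i hi => (hP i hi).2.2.2.2.2.2.1
  have hσi : ∀ i, i < n → σ i i = true := fun i hi => (hP i hi).2.2.2.2.2.2.2.1
  have hσsat : ∀ i, i < n → CNF.sat (σ i) φ := fun i hi => (hP i hi).2.2.2.2.2.2.2.2.1
  have hQchar : ∀ i, i < n → ∀ C ∈ φ, ((i : Var), false) ∈ C →
      (C = {((i : Var), false), a i} ∨ C = {((i : Var), false), b i}) :=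
    fun i hi => (hP i hi).2.2.2.2.2.2.2.2.2
  -- basic derived facts
  have hacase : ∀ i, i < n → (a i).1 = i → a i = ((i : Var), true) := by
    intro i hi h1
    rcases Bool.eq_false_or_eq_true (a i).2 with h2 | h2
    · exact lit_eq_mk h1 h2
    · exact absurd (lit_eq_mk h1 h2) (hanf i hi)
  have hbcase : ∀ i, i < n → (b i).1 = i → b i = ((i : Var), true) := by
    intro i hi h1
    rcases Bool.eq_false_or_eq_true (b i).2 with h2 | h2
    · exact lit_eq_mk h1 h2
    · exact absurd (lit_eq_mk h1 h2) (hbnf i hi)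
  have hσfalse : ∀ i, i < n → ∀ j, j < n → i ≠ j → σ i j = false := by
    intro i hi j hj hij
    have hc := hb i hi j hj hij (σ i) (hσsat i hi)
    rcases Bool.eq_false_or_eq_true (σ i j) with h1 | h1
    · exact absurd ⟨hσi i hi, h1⟩ hc
    · exact h1
  have hσab : ∀ i, i < n → Lit.eval (σ i) (a i) = true ∧ Lit.eval (σ i) (b i) = true := by
    intro i hi
    constructor
    · obtain ⟨l, hl, hlt⟩ := hσsat i hi _ (hmem1 i hi)
      rcases Finset.mem_insert.mp hl with h1 | h2
      · exfalso
        rw [h1] at hlt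
        simp [Lit.eval, hσi i hi] at hlt
      · rwa [Finset.mem_singleton.mp h2] at hlt
    · obtain ⟨l, hl, hlt⟩ := hσsat i hi _ (hmem2 i hi)
      rcases Finset.mem_insert.mp hl with h1 | h2
      · exfalso
        rw [h1] at hlt
        simp [Lit.eval, hσi i hi] at hlt
      · rwa [Finset.mem_singleton.mp h2] at hlt
  -- cross kill: σ i falsifies the pair of j for j ≠ i
  have hkill : ∀ i, i < n → ∀ j, j < n → i ≠ j →
      ¬ (Lit.eval (σ i) (a j) = true ∧ Lit.eval (σ i) (b j) = true) := by
    rintro i hi j hj hij ⟨h1, h2⟩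
    have hτsat : CNF.sat (Function.update (σ i) j true) φ := by
      intro C hC
      set τ := Function.update (σ i) j true with hτ
      obtain ⟨l, hlC, hlt⟩ := hσsat i hi C hC
      by_cases hjC : ((j : Var), false) ∈ C
      · rcases hQchar j hj C hC hjC with hCe | hCe
        · refine ⟨a j, ?_, ?_⟩
          · rw [hCe]; exact Finset.mem_insert_of_mem (Finset.mem_singleton_self _)
          · rw [lit_eval_true_iff]
            by_cases h1j : (a j).1 = j
            · have h2j : (a j).2 = true := congrArg Prod.snd (hacase j hj h1j)
              rw [h1j, h2j, hτ]
              exact Function.update_self j true (σ i)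
            · rw [hτ, Function.update_of_ne h1j]
              exact (lit_eval_true_iff _ _).mp h1
        · refine ⟨b j, ?_, ?_⟩
          · rw [hCe]; exact Finset.mem_insert_of_mem (Finset.mem_singleton_self _)
          · rw [lit_eval_true_iff]
            by_cases h1j : (b j).1 = j
            · have h2j : (b j).2 = true := congrArg Prod.snd (hbcase j hj h1j)
              rw [h1j, h2j, hτ]
              exact Function.update_self j true (σ i)
            · rw [hτ, Function.update_of_ne h1j]
              exact (lit_eval_true_iff _ _).mp h2
      · refine ⟨l, hlC, ?_⟩
        by_cases hl1 : l.1 = j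
        · have hl2 : l.2 = true := by
            rcases Bool.eq_false_or_eq_true l.2 with h2' | h2'
            · exact h2'
            · exfalso
              apply hjC
              rw [← lit_eq_mk hl1 h2']
              exact hlC
          rw [lit_eval_true_iff, hl1, hl2, hτ]
          exact Function.update_self j true (σ i)
        · rw [lit_eval_true_iff, hτ, Function.update_of_ne hl1]
          exact (lit_eval_true_iff _ _).mp hlt
    refine hb i hi j hj hij _ hτsat ⟨?_, ?_⟩
    · rw [Function.update_of_ne hij]
      exact hσi i hi
    · exact Function.update_self j true (σ i)
  -- pair distinctness
  have hpairdist : ∀ i, i < n → ∀ j, j < n →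
      ((a i = a j ∧ b i = b j) ∨ (a i = b j ∧ b i = a j)) → i = j := by
    intro i hi j hj hcase
    by_contra hne
    apply hkill i hi j hj hne
    rcases hcase with ⟨h1, h2⟩ | ⟨h1, h2⟩
    · exact ⟨by rw [← h1]; exact (hσab i hi).1, by rw [← h2]; exact (hσab i hi).2⟩
    · exact ⟨by rw [← h2]; exact (hσab i hi).2, by rw [← h1]; exact (hσab i hi).1⟩
  -- main witness lemma: killer clause with no negative input literal
  have hwitness : ∀ i, i < n → ∀ j, j < n → i ≠ j →
      a j ≠ Lit.negate (a i) → a j ≠ Lit.negate (b i) →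
      b j ≠ Lit.negate (a i) → b j ≠ Lit.negate (b i) →
      ∃ C ∈ φ, (∀ l ∈ C, ¬(l.1 < n ∧ l.2 = false)) ∧
        (∀ l ∈ C, Lit.eval (σ i) l = true →
          (l = Lit.negate (a j) ∨ l = Lit.negate (b j))) := by
    intro i hi j hj hij hd1 hd2 hd3 hd4
    set τ : Var → Bool := fun v =>
      if v = j then true
      else if v = (a j).1 then (a j).2
      else if v = (b j).1 then (b j).2
      else σ i v with hτdef
    have hτj : τ j = true := by simp [hτdef]
    have hτa : Lit.eval τ (a j) = true := by
      rw [lit_eval_true_iff]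
      by_cases h1 : (a j).1 = j
      · have h2j : (a j).2 = true := congrArg Prod.snd (hacase j hj h1)
        rw [h1, h2j]
        exact hτj
      · simp only [hτdef]
        rw [if_neg h1]
        simp
    have hτb : Lit.eval τ (b j) = true := by
      by_cases h1 : (b j).1 = j
      · rw [lit_eval_true_iff]
        have h2j : (b j).2 = true := congrArg Prod.snd (hbcase j hj h1)
        rw [h1, h2j]
        exact hτj
      · by_cases h2 : (b j).1 = (a j).1
        · exfalso
          rcases same_var_cases h2 with he | he
          · exact hab j hj he.symm
          · have hσj := hσab j hj
            have hcon : Lit.eval (σ j) (b j) = ! Lit.eval (σ j) (a j) := by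
              rw [he, lit_eval_negate]
            rw [hσj.1, hσj.2] at hcon
            exact Bool.noConfusion hcon
        · rw [lit_eval_true_iff]
          simp only [hτdef]
          rw [if_neg h1, if_neg h2]
          simp
    have hτunch : ∀ l : Lit, l.1 ≠ j → l.1 ≠ (a j).1 → l.1 ≠ (b j).1 →
        Lit.eval τ l = Lit.eval (σ i) l := by
      intro l u1 u2 u3
      refine lit_eval_congr l ?_
      simp only [hτdef]
      rw [if_neg u1, if_neg u2, if_neg u3]
    have hτi : τ i = true := by
      have h1 : (i : Var) ≠ j := hij
      have h2 : (i : Var) ≠ (a j).1 := by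
        intro hcon
        have hc2 : (a j).1 < n := by rw [← hcon]; exact hi
        have hc3 := havar j hj hc2
        rw [← hcon] at hc3
        exact hij hc3
      have h3 : (i : Var) ≠ (b j).1 := by
        intro hcon
        have hc2 : (b j).1 < n := by rw [← hcon]; exact hi
        have hc3 := hbvar j hj hc2
        rw [← hcon] at hc3
        exact hij hc3
      simp only [hτdef]
      rw [if_neg h1, if_neg h2, if_neg h3]
      exact hσi i hi
    have hτns : ¬ CNF.sat τ φ := by
      intro hs
      exact hb i hi j hj hij τ hs ⟨hτi, hτj⟩
    have hexC : ∃ C ∈ φ, ¬ Clause.sat τ C := by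
      by_contra hcon
      push_neg at hcon
      exact hτns (fun C hC => hcon C hC)
    obtain ⟨C, hCφ, hCns⟩ := hexC
    have hCfalse : ∀ l ∈ C, Lit.eval τ l = false := by
      intro l hl
      rcases Bool.eq_false_or_eq_true (Lit.eval τ l) with h1 | h1
      · exact absurd ⟨l, hl, h1⟩ hCns
      · exact h1
    have hclaim1 : ∀ l ∈ C, ¬(l.1 < n ∧ l.2 = false) := by
      rintro l hl ⟨hln, hl2⟩
      have hleq : l = ((l.1 : Var), false) := lit_eq_mk rfl hl2
      by_cases hm1 : l.1 = j
      · have hCl : ((j : Var), false) ∈ C := by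
          rw [← hm1, ← hleq]; exact hl
        rcases hQchar j hj C hCφ hCl with hCe | hCe
        · have hmemC : a j ∈ C := by
            rw [hCe]; exact Finset.mem_insert_of_mem (Finset.mem_singleton_self _)
          have hf := hCfalse (a j) hmemC
          rw [hτa] at hf
          exact Bool.noConfusion hf
        · have hmemC : b j ∈ C := by
            rw [hCe]; exact Finset.mem_insert_of_mem (Finset.mem_singleton_self _)
          have hf := hCfalse (b j) hmemC
          rw [hτb] at hf
          exact Bool.noConfusion hf
      · by_cases hm2 : l.1 = i
        · have hCl : ((i : Var), false) ∈ C := by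
            rw [← hm2, ← hleq]; exact hl
          rcases hQchar i hi C hCφ hCl with hCe | hCe
          · have hmemC : a i ∈ C := by
              rw [hCe]; exact Finset.mem_insert_of_mem (Finset.mem_singleton_self _)
            have hf := hCfalse (a i) hmemC
            have h1 : (a i).1 ≠ j := by
              intro hcon
              have hc3 := havar i hi (by rw [hcon]; exact hj)
              rw [hcon] at hc3
              exact hij hc3.symm
            have htrue : Lit.eval τ (a i) = true := by
              by_cases h2 : (a i).1 = (a j).1
              · rcases same_var_cases h2 with he | he
                · rw [he]; exact hτa
                · exfalso; apply hd1; rw [he, negate_negate]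
              · by_cases h3 : (a i).1 = (b j).1
                · rcases same_var_cases h3 with he | he
                  · rw [he]; exact hτb
                  · exfalso; apply hd3; rw [he, negate_negate]
                · rw [hτunch _ h1 h2 h3]; exact (hσab i hi).1
            rw [htrue] at hf
            exact Bool.noConfusion hf
          · have hmemC : b i ∈ C := by
              rw [hCe]; exact Finset.mem_insert_of_mem (Finset.mem_singleton_self _)
            have hf := hCfalse (b i) hmemC
            have h1 : (b i).1 ≠ j := by
              intro hcon
              have hc3 := hbvar i hi (by rw [hcon]; exact hj)
              rw [hcon] at hc3
              exact hij hc3.symm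
            have htrue : Lit.eval τ (b i) = true := by
              by_cases h2 : (b i).1 = (a j).1
              · rcases same_var_cases h2 with he | he
                · rw [he]; exact hτa
                · exfalso; apply hd2; rw [he, negate_negate]
              · by_cases h3 : (b i).1 = (b j).1
                · rcases same_var_cases h3 with he | he
                  · rw [he]; exact hτb
                  · exfalso; apply hd4; rw [he, negate_negate]
                · rw [hτunch _ h1 h2 h3]; exact (hσab i hi).2
            rw [htrue] at hf
            exact Bool.noConfusion hf
        · have h1 : l.1 ≠ j := hm1
          have h2 : l.1 ≠ (a j).1 := by
            intro hcon
            have hc2 : (a j).1 < n := by rw [← hcon]; exact hln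
            have hc3 := havar j hj hc2
            rw [← hcon] at hc3
            exact hm1 hc3
          have h3 : l.1 ≠ (b j).1 := by
            intro hcon
            have hc2 : (b j).1 < n := by rw [← hcon]; exact hln
            have hc3 := hbvar j hj hc2
            rw [← hcon] at hc3
            exact hm1 hc3
          have hf := hCfalse l hl
          rw [hτunch l h1 h2 h3] at hf
          have ht : Lit.eval (σ i) l = true := by
            rw [lit_eval_true_iff, hl2]
            exact hσfalse i hi l.1 hln (fun hcon => hm2 hcon.symm)
          rw [ht] at hf
          exact Bool.noConfusion hf
    have hclaim2 : ∀ l ∈ C, Lit.eval (σ i) l = true →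
        (l = Lit.negate (a j) ∨ l = Lit.negate (b j)) := by
      intro l hl hlt
      have hf := hCfalse l hl
      by_cases h1 : l.1 = j
      · exfalso
        rcases same_var_cases (show l.1 = (((j : Var), true) : Lit).1 from h1) with he | he
        · rw [he] at hf
          simp [Lit.eval, hτj] at hf
        · have hlf : l = ((j : Var), false) := by
            rw [he]; rfl
          exact hclaim1 l hl ⟨by rw [hlf]; exact hj, by rw [hlf]⟩
      · by_cases h2 : l.1 = (a j).1
        · rcases same_var_cases h2 with he | he
          · exfalso; rw [he, hτa] at hf; exact Bool.noConfusion hf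
          · exact Or.inl he
        · by_cases h3 : l.1 = (b j).1
          · rcases same_var_cases h3 with he | he
            · exfalso; rw [he, hτb] at hf; exact Bool.noConfusion hf
            · exact Or.inr he
          · exfalso
            rw [hτunch l h1 h2 h3, hlt] at hf
            exact Bool.noConfusion hf
    exact ⟨C, hCφ, hclaim1, hclaim2⟩
  -- the set of clauses with no negative input literal, and its size k
  set Rset : Finset Clause := φ.filter (fun C => ¬ ∃ l ∈ C, l.1 < n ∧ l.2 = false) with hRdef
  set k : ℕ := Rset.card with hkdef
  have hRmem : ∀ C ∈ φ, (∀ l ∈ C, ¬(l.1 < n ∧ l.2 = false)) → C ∈ Rset := by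
    intro C hC hno
    rw [hRdef]
    refine Finset.mem_filter.mpr ⟨hC, ?_⟩
    rintro ⟨l, hl, hcond⟩
    exact hno l hl hcond
  -- stars of a literal
  set star : Lit → Finset ℕ :=
    fun v => (Finset.range n).filter (fun j => a j = v ∨ b j = v) with hstardef
  have hstarmem : ∀ (v : Lit) (j : ℕ), j ∈ star v ↔ (j < n ∧ (a j = v ∨ b j = v)) := by
    intro v j
    rw [hstardef]
    simp [Finset.mem_filter, Finset.mem_range]
  have hstarbound : ∀ v : Lit, (star v).card ≤ max 2 (k + 1) := by
    intro v
    by_cases hsmall : (star v).card ≤ 2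
    · exact le_trans hsmall (le_max_left _ _)
    refine le_trans ?_ (le_max_right _ _)
    push_neg at hsmall
    have hwex : ∀ jj : ℕ, ∃ wl : Lit, jj ∈ star v →
        ((a jj = v ∧ b jj = wl) ∨ (a jj = wl ∧ b jj = v)) := by
      intro jj
      by_cases hjj : jj ∈ star v
      · rcases (hstarmem v jj).mp hjj with ⟨hjn, hav | hbv⟩
        · exact ⟨b jj, fun _ => Or.inl ⟨hav, rfl⟩⟩
        · exact ⟨a jj, fun _ => Or.inr ⟨rfl, hbv⟩⟩
      · exact ⟨(0, true), fun hcon => absurd hcon hjj⟩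
    choose w hw using hwex
    have hwv : ∀ j ∈ star v, Lit.eval (σ j) v = true ∧ Lit.eval (σ j) (w j) = true := by
      intro j hj
      have hjn : j < n := ((hstarmem v j).mp hj).1
      rcases hw j hj with ⟨h1, h2⟩ | ⟨h1, h2⟩
      · exact ⟨by rw [← h1]; exact (hσab j hjn).1, by rw [← h2]; exact (hσab j hjn).2⟩
      · exact ⟨by rw [← h2]; exact (hσab j hjn).2, by rw [← h1]; exact (hσab j hjn).1⟩
    have hwkill : ∀ j ∈ star v, ∀ j' ∈ star v, j ≠ j' → Lit.eval (σ j') (w j) = false := by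
      intro j hj j' hj' hne
      have hjn : j < n := ((hstarmem v j).mp hj).1
      have hj'n : j' < n := ((hstarmem v j').mp hj').1
      have hk2 := hkill j' hj'n j hjn (fun e => hne e.symm)
      rcases Bool.eq_false_or_eq_true (Lit.eval (σ j') (w j)) with h1 | h1
      · exfalso
        apply hk2
        rcases hw j hj with ⟨ha1, hb1⟩ | ⟨ha1, hb1⟩
        · constructor
          · rw [ha1]; exact (hwv j' hj').1
          · rw [hb1]; exact h1
        · constructor
          · rw [ha1]; exact h1
          · rw [hb1]; exact (hwv j' hj').1
      · exact h1
    have hnc : ∀ j ∈ star v, ∀ j' ∈ star v, w j' ≠ Lit.negate (w j) := by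
      intro j hj j' hj' heq
      have hsub : ¬ (star v ⊆ ({j, j'} : Finset ℕ)) := by
        intro hsub
        have hc1 := Finset.card_le_card hsub
        have hc2 : ({j, j'} : Finset ℕ).card ≤ 2 :=
          le_trans (Finset.card_insert_le _ _) (by simp)
        omega
      obtain ⟨j'', hj''mem, hj''ne⟩ := Finset.not_subset.mp hsub
      have h1 : j ≠ j'' := by
        intro e; exact hj''ne (by rw [← e]; exact Finset.mem_insert_self _ _)
      have h2 : j' ≠ j'' := by
        intro e
        exact hj''ne (by rw [← e]; exact Finset.mem_insert_of_mem (Finset.mem_singleton_self _))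
      have hf1 := hwkill j hj j'' hj''mem h1
      have hf2 := hwkill j' hj' j'' hj''mem h2
      rw [heq, lit_eval_negate, hf1] at hf2
      exact Bool.noConfusion hf2
    obtain ⟨s, hs⟩ := Finset.card_pos.mp (show 0 < (star v).card by omega)
    have hsn : s < n := ((hstarmem v s).mp hs).1
    have hforms : ∀ j ∈ star v, (a j = v ∨ a j = w j) ∧ (b j = v ∨ b j = w j) := by
      intro j hj
      rcases hw j hj with ⟨h1, h2⟩ | ⟨h1, h2⟩
      · exact ⟨Or.inl h1, Or.inr h2⟩
      · exact ⟨Or.inr h1, Or.inl h2⟩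
    have hwit : ∀ jj : ℕ, ∃ C : Clause, jj ∈ (star v).erase s →
        (C ∈ Rset ∧ ∀ l ∈ C, Lit.eval (σ s) l = true →
          (l = Lit.negate (a jj) ∨ l = Lit.negate (b jj))) := by
      intro jj
      by_cases hjj : jj ∈ (star v).erase s
      · have hjjs : jj ∈ star v := Finset.mem_of_mem_erase hjj
        have hjjne : jj ≠ s := Finset.ne_of_mem_erase hjj
        have hjjn : jj < n := ((hstarmem v jj).mp hjjs).1
        have hkey : ∀ p q : Lit, (p = v ∨ p = w jj) → (q = v ∨ q = w s) →
            p ≠ Lit.negate q := by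
          intro p q hp hq heq
          rcases hp with hp | hp <;> rcases hq with hq | hq
          · rw [hp, hq] at heq
            exact negate_ne v heq.symm
          · rw [hp, hq] at heq
            have ht := (hwv s hs).1
            rw [heq, lit_eval_negate, (hwv s hs).2] at ht
            exact Bool.noConfusion ht
          · rw [hp, hq] at heq
            have ht := (hwv jj hjjs).2
            rw [heq, lit_eval_negate, (hwv jj hjjs).1] at ht
            exact Bool.noConfusion ht
          · rw [hp, hq] at heq
            exact hnc s hs jj hjjs heq
        obtain ⟨C, hC1, hC2, hC3⟩ := hwitness s hsn jj hjjn (fun e => hjjne e.symm)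
          (hkey _ _ (hforms jj hjjs).1 (hforms s hs).1)
          (hkey _ _ (hforms jj hjjs).1 (hforms s hs).2)
          (hkey _ _ (hforms jj hjjs).2 (hforms s hs).1)
          (hkey _ _ (hforms jj hjjs).2 (hforms s hs).2)
        exact ⟨C, fun _ => ⟨hRmem C hC1 hC2, hC3⟩⟩
      · exact ⟨∅, fun hcon => absurd hcon hjj⟩
    choose f hf using hwit
    have hmapsto : ∀ jj ∈ (star v).erase s, f jj ∈ Rset := fun jj hjj => (hf jj hjj).1
    have hinj : Set.InjOn f ((star v).erase s : Finset ℕ) := by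
      intro j1 hj1 j2 hj2 heq
      have hj1e : j1 ∈ (star v).erase s := hj1
      have hj2e : j2 ∈ (star v).erase s := hj2
      have hj1s : j1 ∈ star v := Finset.mem_of_mem_erase hj1e
      have hj2s : j2 ∈ star v := Finset.mem_of_mem_erase hj2e
      have hj1n : j1 < n := ((hstarmem v j1).mp hj1s).1
      have hj2n : j2 < n := ((hstarmem v j2).mp hj2s).1
      obtain ⟨hfR, hfprop1⟩ := hf j1 hj1e
      obtain ⟨hfR2, hfprop2⟩ := hf j2 hj2e
      have hfφ : f j1 ∈ φ := by
        rw [hRdef] at hfR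
        exact (Finset.mem_filter.mp hfR).1
      obtain ⟨l, hl, hlt⟩ := hσsat s hsn (f j1) hfφ
      have hp1 := hfprop1 l hl hlt
      have hp2 := hfprop2 l (by rw [← heq]; exact hl) hlt
      have hlnv : l ≠ Lit.negate v := by
        intro hcon
        rw [hcon, lit_eval_negate, (hwv s hs).1] at hlt
        exact Bool.noConfusion hlt
      have hlw1 : l = Lit.negate (w j1) := by
        rcases hp1 with hp | hp
        · rcases (hforms j1 hj1s).1 with hfo | hfo
          · exfalso; apply hlnv; rw [hp, hfo]
          · rw [hp, hfo]
        · rcases (hforms j1 hj1s).2 with hfo | hfo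
          · exfalso; apply hlnv; rw [hp, hfo]
          · rw [hp, hfo]
      have hlw2 : l = Lit.negate (w j2) := by
        rcases hp2 with hp | hp
        · rcases (hforms j2 hj2s).1 with hfo | hfo
          · exfalso; apply hlnv; rw [hp, hfo]
          · rw [hp, hfo]
        · rcases (hforms j2 hj2s).2 with hfo | hfo
          · exfalso; apply hlnv; rw [hp, hfo]
          · rw [hp, hfo]
      have hww : w j1 = w j2 := by
        rw [← negate_negate (w j1), ← hlw1, hlw2, negate_negate]
      apply hpairdist j1 hj1n j2 hj2n
      rcases (hw j1 hj1s) with ⟨ha1, hb1⟩ | ⟨ha1, hb1⟩ <;>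
        rcases (hw j2 hj2s) with ⟨ha2, hb2⟩ | ⟨ha2, hb2⟩
      · exact Or.inl ⟨by rw [ha1, ha2], by rw [hb1, hb2, hww]⟩
      · exact Or.inr ⟨by rw [ha1, hb2], by rw [hb1, ha2, hww]⟩
      · exact Or.inr ⟨by rw [ha1, hww, ← hb2], by rw [hb1, ha2]⟩
      · exact Or.inl ⟨by rw [ha1, hww, ← ha2], by rw [hb1, hb2]⟩
    have hcard := Finset.card_le_card_of_injOn f hmapsto hinj
    have hce : ((star v).erase s).card = (star v).card - 1 := Finset.card_erase_of_mem hs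
    rw [hce, ← hkdef] at hcard
    omega
  -- the main count around input 0
  have h0n : 0 < n := by omega
  have huex : ∀ C : Clause, ∃ ul : Lit, C ∈ φ →
      (ul ∈ C ∧ Lit.eval (σ 0) ul = true) := by
    intro C
    by_cases hC : C ∈ φ
    · obtain ⟨l, hl, hlt⟩ := hσsat 0 h0n C hC
      exact ⟨l, fun _ => ⟨hl, hlt⟩⟩
    · exact ⟨(0, true), fun hcon => absurd hcon hC⟩
  choose u hu using huex
  have hcover : (Finset.range n).erase 0 ⊆
      (star (Lit.negate (a 0)) ∪ star (Lit.negate (b 0))) ∪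
        Rset.biUnion (fun C => star (Lit.negate (u C))) := by
    intro j hj
    have hjne : j ≠ 0 := Finset.ne_of_mem_erase hj
    have hjn : j < n := Finset.mem_range.mp (Finset.mem_of_mem_erase hj)
    by_cases hjs : j ∈ star (Lit.negate (a 0)) ∪ star (Lit.negate (b 0))
    · exact Finset.mem_union_left _ hjs
    · refine Finset.mem_union_right _ ?_
      rw [Finset.mem_union] at hjs
      push_neg at hjs
      obtain ⟨hns1, hns2⟩ := hjs
      have hd1 : a j ≠ Lit.negate (a 0) := fun hcon =>
        hns1 ((hstarmem _ j).mpr ⟨hjn, Or.inl hcon⟩)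
      have hd3 : b j ≠ Lit.negate (a 0) := fun hcon =>
        hns1 ((hstarmem _ j).mpr ⟨hjn, Or.inr hcon⟩)
      have hd2 : a j ≠ Lit.negate (b 0) := fun hcon =>
        hns2 ((hstarmem _ j).mpr ⟨hjn, Or.inl hcon⟩)
      have hd4 : b j ≠ Lit.negate (b 0) := fun hcon =>
        hns2 ((hstarmem _ j).mpr ⟨hjn, Or.inr hcon⟩)
      obtain ⟨C, hCφ, hCno, hCprop⟩ :=
        hwitness 0 h0n j hjn (fun e => hjne e.symm) hd1 hd2 hd3 hd4
      have hCR : C ∈ Rset := hRmem C hCφ hCno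
      refine Finset.mem_biUnion.mpr ⟨C, hCR, ?_⟩
      obtain ⟨huC, huT⟩ := hu C hCφ
      rcases hCprop (u C) huC huT with he | he
      · refine (hstarmem _ j).mpr ⟨hjn, Or.inl ?_⟩
        rw [he, negate_negate]
      · refine (hstarmem _ j).mpr ⟨hjn, Or.inr ?_⟩
        rw [he, negate_negate]
  have hsum : (Rset.biUnion (fun C => star (Lit.negate (u C)))).card ≤ k * max 2 (k + 1) := by
    refine le_trans Finset.card_biUnion_le ?_
    refine le_trans (Finset.sum_le_sum (fun C _ => hstarbound (Lit.negate (u C)))) ?_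
    rw [Finset.sum_const, smul_eq_mul, hkdef]
  have hmain : n - 1 ≤ max 2 (k + 1) + max 2 (k + 1) + k * max 2 (k + 1) := by
    have h1 : ((Finset.range n).erase 0).card = n - 1 := by
      rw [Finset.card_erase_of_mem (Finset.mem_range.mpr h0n), Finset.card_range]
    rw [← h1]
    refine le_trans (Finset.card_le_card hcover) ?_
    refine le_trans (Finset.card_union_le _ _) ?_
    refine le_trans (Nat.add_le_add_right (Finset.card_union_le _ _) _) ?_
    exact Nat.add_le_add (Nat.add_le_add (hstarbound _) (hstarbound _)) hsum
  -- arithmetic: k ≥ 1, and n ≤ (k+2)(k+1) + 1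
  have hknz : 1 ≤ k := by
    by_contra hk0
    push_neg at hk0
    have hk : k = 0 := by omega
    rw [hk] at hmain
    norm_num at hmain
    omega
  have hD : max 2 (k + 1) = k + 1 := max_eq_right (by omega)
  rw [hD] at hmain
  have hnk : n ≤ (k + 1) + (k + 1) + k * (k + 1) + 1 := by omega
  -- |φ| = 2n + k
  have hQdisj : ∀ i ∈ Finset.range n, ∀ j ∈ Finset.range n, i ≠ j →
      Disjoint (Qset φ i) (Qset φ j) := by
    intro i hi j hj hij
    rw [Finset.disjoint_left]
    intro C hCi hCj
    have h1 := (hreg i (Finset.mem_range.mp hi)).2.1 C hCi ((j : Var), false)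
      (Finset.mem_filter.mp hCj).2 (Finset.mem_range.mp hj)
    exact hij h1.symm
  have hNegcard : (φ.filter (fun C => ∃ l ∈ C, l.1 < n ∧ l.2 = false)).card = 2 * n := by
    have hset : φ.filter (fun C => ∃ l ∈ C, l.1 < n ∧ l.2 = false)
        = (Finset.range n).biUnion (fun i => Qset φ i) := by
      ext C
      constructor
      · intro hC
        obtain ⟨hCφ, l, hl, hln, hl2⟩ := Finset.mem_filter.mp hC
        refine Finset.mem_biUnion.mpr ⟨l.1, Finset.mem_range.mpr hln, ?_⟩
        refine Finset.mem_filter.mpr ⟨hCφ, ?_⟩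
        rw [← lit_eq_mk (rfl : l.1 = l.1) hl2]
        exact hl
      · intro hC
        obtain ⟨i, hin, hCQ⟩ := Finset.mem_biUnion.mp hC
        obtain ⟨hCφ, hCl⟩ := Finset.mem_filter.mp hCQ
        exact Finset.mem_filter.mpr
          ⟨hCφ, ((i : Var), false), hCl, Finset.mem_range.mp hin, rfl⟩
    rw [hset, Finset.card_biUnion hQdisj]
    have hq2 : ∀ i ∈ Finset.range n, (Qset φ i).card = 2 :=
      fun i hi => (hreg i (Finset.mem_range.mp hi)).1
    rw [Finset.sum_congr rfl hq2, Finset.sum_const, Finset.card_range, smul_eq_mul, mul_comm]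
  have hsplit : (φ.filter (fun C => ∃ l ∈ C, l.1 < n ∧ l.2 = false)).card + k = φ.card := by
    rw [hkdef, hRdef]
    exact Finset.card_filter_add_card_filter_not
      (p := fun C : Clause => ∃ l ∈ C, l.1 < n ∧ l.2 = false)
  have hφcard : φ.card = 2 * n + k := by
    omega
  -- final real arithmetic
  have hsq : ((n : ℝ) + 1) ≤ ((k : ℝ) + 2) ^ 2 := by
    have h1 : (n : ℝ) ≤ ((k : ℝ) + 1) + ((k : ℝ) + 1) + (k : ℝ) * ((k : ℝ) + 1) + 1 := by
      exact_mod_cast hnk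
    nlinarith [h1]
  have hsqrt : Real.sqrt ((n : ℝ) + 1) ≤ (k : ℝ) + 2 := by
    have h1 := Real.sqrt_le_sqrt hsq
    rwa [Real.sqrt_sq (by positivity)] at h1
  have hcast : (φ.card : ℝ) = 2 * (n : ℝ) + (k : ℝ) := by
    rw [hφcard]; push_cast; ring
  rw [hcast]
  linarith [hsqrt]
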